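/- arXiv:1802.04778 — 2 statements merged into one kernel-verified Lean document; each statement's English description precedes it below -/
import Mathlib

section
/- Let (X1, X2) be a random vector on ℝ² whose law has density f with respect to Lebesgue measure, where f is the bivariate normal density with means μ1, μ2 ∈ ℝ, standard deviations σ1, σ2 > 0 and correlation ρ ∈ (−1,1). Then for every x > 0: P{X1 < 0 and X2 < 0 and X1 ≥ x·X2} = ∫₀^x g̃(t) dt, where g̃(t) := −∫_{−∞}^0 s·f(t·s, s) ds; and for every x ≤ 0 this probability is 0. (Note that on the event X1 < 0, X2 < 0 the condition X1/X2 ≤ x is equivalent to X1 ≥ x·X2, so g̃/P(Q3) is the conditional density of X1/X2 on the third quadrant.) -/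
open Real MeasureTheory ProbabilityTheory Set Filter

/-- The bivariate normal density with means `μ1, μ2`, standard deviations `σ1, σ2`
and correlation `ρ`. -/
noncomputable def bvnDensity (μ1 μ2 σ1 σ2 ρ : ℝ) (s1 s2 : ℝ) : ℝ :=
  (2 * π * σ1 * σ2 * Real.sqrt (1 - ρ ^ 2))⁻¹ *
    Real.exp (-(1 / 2) * (((s2 - μ2) / σ2) ^ 2 +
      (s1 - μ1 - ρ * (σ1 / σ2) * (s2 - μ2)) ^ 2 / (σ1 ^ 2 * (1 - ρ ^ 2))))

/-- `|s| * exp (-b (s-c)^2)` is integrable. -/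
lemma gauss_abs_integrable {b : ℝ} (hb : 0 < b) (c : ℝ) :
    Integrable (fun s : ℝ => |s| * Real.exp (-b * (s - c) ^ 2)) := by
  have hx : Integrable (fun u : ℝ => |u| * Real.exp (-b * u ^ 2)) := by
    have h := (integrable_rpow_mul_exp_neg_mul_sq hb (by norm_num : (-1:ℝ) < 1)).abs
    simp only [Real.rpow_one] at h
    refine h.congr (Eventually.of_forall fun u => ?_)
    show |u * Real.exp (-b * u ^ 2)| = |u| * Real.exp (-b * u ^ 2)
    rw [abs_mul, abs_of_pos (Real.exp_pos _)]
  have hcst : Integrable (fun u : ℝ => |c| * Real.exp (-b * u ^ 2)) :=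
    (integrable_exp_neg_mul_sq hb).const_mul |c|
  have h1 : Integrable (fun u : ℝ => |u + c| * Real.exp (-b * u ^ 2)) := by
    refine (hx.add hcst).mono' ?_ (Eventually.of_forall fun u => ?_)
    · exact ((continuous_abs.comp (continuous_id.add continuous_const)).mul
        (Real.continuous_exp.comp (by fun_prop))).aestronglyMeasurable
    · have h2 : |u + c| ≤ |u| + |c| := abs_add_le _ _
      have h3 : (0:ℝ) < Real.exp (-b * u ^ 2) := Real.exp_pos _
      rw [Real.norm_eq_abs, abs_mul, abs_of_pos h3, abs_abs]
      simp only [Pi.add_apply]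
      nlinarith
  refine (h1.comp_sub_right c).congr (Eventually.of_forall fun s => ?_)
  simp [sub_add_cancel]

theorem quotient_cdf_third_quadrant
    {Ω : Type*} [MeasurableSpace Ω] (P : Measure Ω) [IsProbabilityMeasure P]
    (X1 X2 : Ω → ℝ) (hX : Measurable fun ω => (X1 ω, X2 ω))
    (μ1 μ2 σ1 σ2 ρ : ℝ) (hσ1 : 0 < σ1) (hσ2 : 0 < σ2) (hρ : ρ ∈ Set.Ioo (-1 : ℝ) 1)
    (hlaw : Measure.map (fun ω => (X1 ω, X2 ω)) P =
      volume.withDensity fun p => ENNReal.ofReal (bvnDensity μ1 μ2 σ1 σ2 ρ p.1 p.2)) :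
    ∀ x : ℝ,
      (0 < x →
        P {ω | X1 ω < 0 ∧ X2 ω < 0 ∧ x * X2 ω ≤ X1 ω} =
          ENNReal.ofReal (∫ t in (0 : ℝ)..x,
            -∫ s in Set.Iio (0 : ℝ), s * bvnDensity μ1 μ2 σ1 σ2 ρ (t * s) s)) ∧
      (x ≤ 0 → P {ω | X1 ω < 0 ∧ X2 ω < 0 ∧ x * X2 ω ≤ X1 ω} = 0) := by
  -- preliminary facts
  have h1ρ : 0 < 1 - ρ ^ 2 := by nlinarith [hρ.1, hρ.2]
  have hC : 0 < (2 * π * σ1 * σ2 * Real.sqrt (1 - ρ ^ 2))⁻¹ := by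
    have := Real.sqrt_pos.mpr h1ρ
    have := Real.pi_pos
    positivity
  set C := (2 * π * σ1 * σ2 * Real.sqrt (1 - ρ ^ 2))⁻¹ with hCdef
  have hnn : ∀ s1 s2, 0 ≤ bvnDensity μ1 μ2 σ1 σ2 ρ s1 s2 := fun s1 s2 =>
    mul_nonneg hC.le (Real.exp_pos _).le
  have hcont : Continuous (fun p : ℝ × ℝ => bvnDensity μ1 μ2 σ1 σ2 ρ p.1 p.2) := by
    unfold bvnDensity; fun_prop
  set b : ℝ := 1 / (2 * σ2 ^ 2) with hbdef
  have hb : 0 < b := by positivity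
  have hble : ∀ s1 s2, bvnDensity μ1 μ2 σ1 σ2 ρ s1 s2 ≤ C * Real.exp (-b * (s2 - μ2) ^ 2) := by
    intro s1 s2
    unfold bvnDensity
    rw [← hCdef]
    refine mul_le_mul_of_nonneg_left (Real.exp_le_exp.mpr ?_) hC.le
    have hB : 0 ≤ (s1 - μ1 - ρ * (σ1 / σ2) * (s2 - μ2)) ^ 2 / (σ1 ^ 2 * (1 - ρ ^ 2)) :=
      div_nonneg (sq_nonneg _) (by positivity)
    have heq : -b * (s2 - μ2) ^ 2 = -(1 / 2) * ((s2 - μ2) / σ2) ^ 2 := by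
      rw [hbdef]; field_simp
    rw [heq]
    nlinarith
  -- integrability of the key integrand
  have hIntAll : ∀ t : ℝ, Integrable (fun s => s * bvnDensity μ1 μ2 σ1 σ2 ρ (t * s) s) := by
    intro t
    refine ((gauss_abs_integrable hb μ2).const_mul C).mono' ?_ (Eventually.of_forall fun s => ?_)
    · exact (continuous_id.mul (hcont.comp
        ((continuous_const.mul continuous_id).prodMk continuous_id))).aestronglyMeasurable
    · rw [Real.norm_eq_abs, abs_mul, abs_of_nonneg (hnn _ _)]
      calc |s| * bvnDensity μ1 μ2 σ1 σ2 ρ (t * s) s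
          ≤ |s| * (C * Real.exp (-b * (s - μ2) ^ 2)) :=
            mul_le_mul_of_nonneg_left (hble _ _) (abs_nonneg s)
        _ = C * (|s| * Real.exp (-b * (s - μ2) ^ 2)) := by ring
  have hIntNeg : ∀ t : ℝ, IntegrableOn (fun s => -s * bvnDensity μ1 μ2 σ1 σ2 ρ (t * s) s)
      (Iio (0:ℝ)) := by
    intro t
    exact ((hIntAll t).neg.congr (Eventually.of_forall fun s => (neg_mul _ _).symm)).integrableOn
  intro x
  constructor
  · intro hx
    -- the target set in ℝ²
    set S : Set (ℝ × ℝ) := {p | p.1 < 0 ∧ p.2 < 0 ∧ x * p.2 ≤ p.1} with hSdef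
    have hS : MeasurableSet S :=
      (measurableSet_lt measurable_fst measurable_const).inter
        ((measurableSet_lt measurable_snd measurable_const).inter
          (measurableSet_le (measurable_const.mul measurable_snd) measurable_fst))
    set g : ℝ × ℝ → ENNReal := fun p => ENNReal.ofReal (bvnDensity μ1 μ2 σ1 σ2 ρ p.1 p.2)
      with hgdef
    have hg : Measurable g := hcont.measurable.ennreal_ofReal
    have step1 : P {ω | X1 ω < 0 ∧ X2 ω < 0 ∧ x * X2 ω ≤ X1 ω} =
        Measure.map (fun ω => (X1 ω, X2 ω)) P S := by
      rw [Measure.map_apply hX hS]; rfl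
    have step2 : Measure.map (fun ω => (X1 ω, X2 ω)) P S = ∫⁻ p in S, g p := by
      rw [hlaw, withDensity_apply _ hS]
    -- slice by the second coordinate
    have step3 : ∫⁻ p in S, g p =
        ∫⁻ s in Iio (0:ℝ), ∫⁻ s1 in Ico (x * s) 0, g (s1, s) := by
      calc ∫⁻ p in S, g p = ∫⁻ p, S.indicator g p := (lintegral_indicator hS g).symm
        _ = ∫⁻ p, S.indicator g p ∂((volume : Measure ℝ).prod volume) := by
            rw [← Measure.volume_eq_prod]
        _ = ∫⁻ s2, ∫⁻ s1, S.indicator g (s1, s2) :=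
            lintegral_prod_symm _ (hg.indicator hS).aemeasurable
        _ = ∫⁻ s2, (Iio (0:ℝ)).indicator
              (fun s2 => ∫⁻ s1 in Ico (x * s2) 0, g (s1, s2)) s2 := by
            refine lintegral_congr fun s2 => ?_
            by_cases h2 : s2 < 0
            · rw [indicator_of_mem (mem_Iio.mpr h2)]
              have hptw : ∀ s1, S.indicator g (s1, s2) =
                  (Ico (x * s2) 0).indicator (fun s1 => g (s1, s2)) s1 := by
                intro s1
                by_cases h1 : s1 ∈ Ico (x * s2) 0
                · rw [indicator_of_mem h1, indicator_of_mem (show (s1, s2) ∈ S from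
                    ⟨h1.2, h2, h1.1⟩)]
                · rw [indicator_of_notMem h1, indicator_of_notMem
                    (fun hmem => h1 ⟨hmem.2.2, hmem.1⟩)]
              simp_rw [hptw]
              exact lintegral_indicator measurableSet_Ico _
            · rw [indicator_of_notMem (by simpa using h2)]
              have hptw : ∀ s1, S.indicator g (s1, s2) = 0 := fun s1 =>
                indicator_of_notMem (fun hmem => h2 hmem.2.1) g
              simp_rw [hptw]
              exact lintegral_zero
        _ = ∫⁻ s in Iio (0:ℝ), ∫⁻ s1 in Ico (x * s) 0, g (s1, s) :=
            lintegral_indicator measurableSet_Iio _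
    -- one-dimensional change of variables in the first coordinate
    have step4 : ∀ s : ℝ, s < 0 →
        ∫⁻ s1 in Ico (x * s) 0, g (s1, s) =
          ∫⁻ t in Ioc (0:ℝ) x, ENNReal.ofReal (-s) * g (t * s, s) := by
      intro s hs
      have hinj : InjOn (fun t : ℝ => t * s) (Ioc 0 x) := fun a _ c _ h =>
        mul_right_cancel₀ hs.ne h
      have himg : (fun t : ℝ => t * s) '' Ioc 0 x = Ico (x * s) 0 := by
        ext y
        constructor
        · rintro ⟨t, ⟨ht0, htx⟩, rfl⟩
          exact ⟨mul_le_mul_of_nonpos_right htx hs.le, mul_neg_of_pos_of_neg ht0 hs⟩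
        · rintro ⟨hxs, hy0⟩
          refine ⟨y / s, ⟨div_pos_of_neg_of_neg hy0 hs, ?_⟩, div_mul_cancel₀ y hs.ne⟩
          rw [div_le_iff_of_neg hs]
          linarith
      have hderiv : ∀ t ∈ Ioc (0:ℝ) x, HasFDerivWithinAt (fun t : ℝ => t * s)
          ((1 : ℝ →L[ℝ] ℝ).smulRight s) (Ioc 0 x) t := fun t _ =>
        (hasDerivAt_mul_const s).hasDerivWithinAt.hasFDerivWithinAt
      have h := lintegral_image_eq_lintegral_abs_det_fderiv_mul volume measurableSet_Ioc
        hderiv hinj (fun s1 => g (s1, s))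
      rw [himg] at h
      rw [h]
      refine lintegral_congr fun t => ?_
      rw [show ((1 : ℝ →L[ℝ] ℝ).smulRight s) = ContinuousLinearMap.toSpanSingleton ℝ s from rfl,
        ContinuousLinearMap.det_toSpanSingleton, abs_of_neg hs]
    have step4' : ∫⁻ s in Iio (0:ℝ), ∫⁻ s1 in Ico (x * s) 0, g (s1, s) =
        ∫⁻ s in Iio (0:ℝ), ∫⁻ t in Ioc (0:ℝ) x, ENNReal.ofReal (-s) * g (t * s, s) :=
      setLIntegral_congr_fun measurableSet_Iio
        (fun s hs => step4 s hs)
    -- Tonelli: swap the order of integration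
    have step5 : ∫⁻ s in Iio (0:ℝ), ∫⁻ t in Ioc (0:ℝ) x, ENNReal.ofReal (-s) * g (t * s, s) =
        ∫⁻ t in Ioc (0:ℝ) x, ∫⁻ s in Iio (0:ℝ), ENNReal.ofReal (-s) * g (t * s, s) := by
      refine lintegral_lintegral_swap ?_
      refine (Measurable.mul (f := fun p : ℝ × ℝ => ENNReal.ofReal (-p.1))
        (g := fun p : ℝ × ℝ => g (p.2 * p.1, p.1)) ?_ ?_).aemeasurable
      · exact measurable_fst.neg.ennreal_ofReal
      · exact (hcont.comp ((continuous_snd.mul continuous_fst).prodMk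
          continuous_fst)).measurable.ennreal_ofReal
    -- inner integral as a Bochner integral
    have step6 : ∀ t : ℝ,
        ∫⁻ s in Iio (0:ℝ), ENNReal.ofReal (-s) * g (t * s, s) =
          ENNReal.ofReal (-∫ s in Iio (0:ℝ), s * bvnDensity μ1 μ2 σ1 σ2 ρ (t * s) s) := by
      intro t
      have hnn' : 0 ≤ᵐ[volume.restrict (Iio (0:ℝ))]
          fun s => -s * bvnDensity μ1 μ2 σ1 σ2 ρ (t * s) s := by
        filter_upwards [ae_restrict_mem measurableSet_Iio] with s hs
        exact mul_nonneg (by simp only [mem_Iio] at hs; linarith) (hnn _ _)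
      calc ∫⁻ s in Iio (0:ℝ), ENNReal.ofReal (-s) * g (t * s, s)
          = ∫⁻ s in Iio (0:ℝ),
              ENNReal.ofReal (-s * bvnDensity μ1 μ2 σ1 σ2 ρ (t * s) s) := by
            refine setLIntegral_congr_fun measurableSet_Iio
              (fun s hs => ?_)
            rw [hgdef]
            rw [← ENNReal.ofReal_mul (by simp only [mem_Iio] at hs; linarith : (0:ℝ) ≤ -s)]
        _ = ENNReal.ofReal (∫ s in Iio (0:ℝ), -s * bvnDensity μ1 μ2 σ1 σ2 ρ (t * s) s) :=
            (ofReal_integral_eq_lintegral_ofReal (hIntNeg t) hnn').symm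
        _ = ENNReal.ofReal (-∫ s in Iio (0:ℝ), s * bvnDensity μ1 μ2 σ1 σ2 ρ (t * s) s) := by
            congr 1
            simp_rw [neg_mul]
            exact integral_neg _
    -- properties of the outer integrand
    set G : ℝ → ℝ := fun t => -∫ s in Iio (0:ℝ), s * bvnDensity μ1 μ2 σ1 σ2 ρ (t * s) s
      with hGdef
    have hGeq : ∀ t, G t = ∫ s in Iio (0:ℝ), -s * bvnDensity μ1 μ2 σ1 σ2 ρ (t * s) s := by
      intro t
      rw [hGdef]
      simp_rw [neg_mul]
      rw [integral_neg]
    have hGnn : ∀ t, 0 ≤ G t := by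
      intro t
      rw [hGeq]
      exact setIntegral_nonneg measurableSet_Iio fun s hs =>
        mul_nonneg (by simp only [mem_Iio] at hs; linarith) (hnn _ _)
    have hGm : StronglyMeasurable G := by
      have : StronglyMeasurable
          (fun t : ℝ => ∫ s in Iio (0:ℝ), s * bvnDensity μ1 μ2 σ1 σ2 ρ (t * s) s) := by
        apply StronglyMeasurable.integral_prod_right
        exact (continuous_snd.mul (hcont.comp
          ((continuous_fst.mul continuous_snd).prodMk continuous_snd))).stronglyMeasurable
      exact this.neg
    set M : ℝ := ∫ s in Iio (0:ℝ), C * (|s| * Real.exp (-b * (s - μ2) ^ 2)) with hMdef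
    have hMint : IntegrableOn (fun s : ℝ => C * (|s| * Real.exp (-b * (s - μ2) ^ 2)))
        (Iio (0:ℝ)) := ((gauss_abs_integrable hb μ2).const_mul C).integrableOn
    have hGle : ∀ t, G t ≤ M := by
      intro t
      rw [hGeq, hMdef]
      refine setIntegral_mono_on (hIntNeg t) hMint measurableSet_Iio fun s hs => ?_
      simp only [mem_Iio] at hs
      calc -s * bvnDensity μ1 μ2 σ1 σ2 ρ (t * s) s
          ≤ -s * (C * Real.exp (-b * (s - μ2) ^ 2)) :=
            mul_le_mul_of_nonneg_left (hble _ _) (by linarith)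
        _ = C * (-s * Real.exp (-b * (s - μ2) ^ 2)) := by ring
        _ ≤ C * (|s| * Real.exp (-b * (s - μ2) ^ 2)) := by
            refine mul_le_mul_of_nonneg_left ?_ hC.le
            exact mul_le_mul_of_nonneg_right (neg_le_abs s) (Real.exp_pos _).le
    have hGint : IntegrableOn G (Ioc (0:ℝ) x) := by
      refine Integrable.mono' (g := fun _ : ℝ => M) (integrableOn_const measure_Ioc_lt_top.ne)
        hGm.aestronglyMeasurable.restrict (Eventually.of_forall fun t => ?_)
      rw [Real.norm_eq_abs, abs_of_nonneg (hGnn t)]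
      exact hGle t
    have step7 : ∫⁻ t in Ioc (0:ℝ) x, ENNReal.ofReal (G t) =
        ENNReal.ofReal (∫ t in Ioc (0:ℝ) x, G t) :=
      (ofReal_integral_eq_lintegral_ofReal hGint
        (Eventually.of_forall fun t => hGnn t)).symm
    rw [step1, step2, step3, step4', step5]
    rw [lintegral_congr step6, step7, intervalIntegral.integral_of_le hx.le]
  · intro hx
    have hempty : {ω | X1 ω < 0 ∧ X2 ω < 0 ∧ x * X2 ω ≤ X1 ω} = ∅ := by
      ext ω
      simp only [mem_setOf_eq, mem_empty_iff_false, iff_false, not_and]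
      intro h1 h2 h3
      nlinarith
    rw [hempty, measure_empty]
end

section
/- Fix μ1 ∈ ℝ, μ2 > 0, σ1 > 0 and x ∈ ℝ. Then in the limit of a deterministic denominator (ρ = 0, σ2 → 0⁺), the quotient density converges to the density of a normal divided by the constant μ2: lim_{σ2 → 0⁺} (2π σ1 σ2)^{−1} ∫₀^∞ s·exp(−(s − μ2)²/(2σ2²))·exp(−(x·s − μ1)²/(2σ1²)) ds = (μ2/(√(2π)·σ1))·exp(−(x·μ2 − μ1)²/(2σ1²)). -/
open Real MeasureTheory Set Filter

theorem quotient_density_constant_denominator_limit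
    (μ1 : ℝ) (μ2 σ1 : ℝ) (hμ2 : 0 < μ2) (hσ1 : 0 < σ1) (x : ℝ) :
    Filter.Tendsto
      (fun σ2 : ℝ => (2 * π * σ1 * σ2)⁻¹ *
        ∫ s in Set.Ioi (0 : ℝ),
          s * Real.exp (-(s - μ2) ^ 2 / (2 * σ2 ^ 2)) *
            Real.exp (-(x * s - μ1) ^ 2 / (2 * σ1 ^ 2)))
      (nhdsWithin 0 (Set.Ioi 0))
      (nhds (μ2 / (Real.sqrt (2 * π) * σ1) *
        Real.exp (-(x * μ2 - μ1) ^ 2 / (2 * σ1 ^ 2)))) := by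
  have hπ : (0:ℝ) < π := Real.pi_pos
  set C : ℝ := Real.exp (-(x * μ2 - μ1) ^ 2 / (2 * σ1 ^ 2)) with hCdef
  set g : ℝ → ℝ := fun s => s * Real.exp (-(x * s - μ1) ^ 2 / (2 * σ1 ^ 2)) with hgdef
  set h : ℝ → ℝ → ℝ := fun σ2 t =>
    Set.indicator (Set.Ioi (0:ℝ)) g (σ2 * t + μ2) * Real.exp (-t ^ 2 / 2) with hhdef
  have hg_cont : Continuous g := by
    apply continuous_id.mul
    exact (((continuous_const.mul continuous_id).sub continuous_const).pow 2).neg.div_const _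
      |>.rexp
  -- Step 1: change of variables, for σ2 > 0
  have key : ∀ σ2 : ℝ, 0 < σ2 →
      (∫ s in Set.Ioi (0:ℝ),
          s * Real.exp (-(s - μ2) ^ 2 / (2 * σ2 ^ 2)) *
            Real.exp (-(x * s - μ1) ^ 2 / (2 * σ1 ^ 2)))
        = σ2 * ∫ t : ℝ, h σ2 t := by
    intro σ2 hσ2
    have hσ2' : σ2 ≠ 0 := ne_of_gt hσ2
    set q : ℝ → ℝ := fun s =>
      Set.indicator (Set.Ioi (0:ℝ)) g s * Real.exp (-(s - μ2) ^ 2 / (2 * σ2 ^ 2)) with hqdef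
    have h1 : (∫ s in Set.Ioi (0:ℝ),
          s * Real.exp (-(s - μ2) ^ 2 / (2 * σ2 ^ 2)) *
            Real.exp (-(x * s - μ1) ^ 2 / (2 * σ1 ^ 2))) = ∫ s : ℝ, q s := by
      rw [← integral_indicator measurableSet_Ioi]
      congr 1
      funext s
      by_cases hs : s ∈ Set.Ioi (0:ℝ)
      · simp only [hqdef, Set.indicator_of_mem hs, hgdef]
        ring
      · simp [hqdef, Set.indicator_of_notMem hs]
    have h2 : (∫ s : ℝ, q s) = σ2 * ∫ t : ℝ, q (σ2 * t + μ2) := by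
      have := MeasureTheory.Measure.integral_comp_mul_left
        (fun y => q (y + μ2)) σ2
      have h3 : (∫ y : ℝ, q (y + μ2)) = ∫ s : ℝ, q s :=
        integral_add_right_eq_self q μ2
      rw [h3] at this
      rw [this, abs_of_pos (inv_pos.mpr hσ2), smul_eq_mul]
      field_simp
    have h4 : ∀ t : ℝ, q (σ2 * t + μ2) = h σ2 t := by
      intro t
      simp only [hqdef, hhdef]
      congr 1
      congr 1
      have : σ2 * t + μ2 - μ2 = σ2 * t := by ring
      rw [this]
      field_simp
    rw [h1, h2]
    congr 1
    exact integral_congr_ae (Filter.Eventually.of_forall h4)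
  -- Step 2: dominated convergence
  have hbound_int : Integrable (fun t : ℝ => (μ2 + |t|) * Real.exp (-t ^ 2 / 2)) := by
    have e1 : Integrable (fun t : ℝ => Real.exp (-(1/2 : ℝ) * t ^ 2)) :=
      integrable_exp_neg_mul_sq (by norm_num)
    have e2 : Integrable (fun t : ℝ => t * Real.exp (-(1/2 : ℝ) * t ^ 2)) :=
      integrable_mul_exp_neg_mul_sq (by norm_num)
    have e3 : Integrable (fun t : ℝ => μ2 * Real.exp (-(1/2 : ℝ) * t ^ 2) +
        |t * Real.exp (-(1/2 : ℝ) * t ^ 2)|) := (e1.const_mul μ2).add e2.abs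
    refine e3.congr (Filter.Eventually.of_forall fun t => ?_)
    have hexp : Real.exp (-(1/2 : ℝ) * t ^ 2) = Real.exp (-t ^ 2 / 2) := by
      congr 1; ring
    dsimp only
    rw [abs_mul, Real.abs_exp, hexp]
    ring
  have hmeas : ∀ᶠ σ2 in nhdsWithin (0:ℝ) (Set.Ioi 0),
      AEStronglyMeasurable (h σ2) volume := by
    refine Filter.Eventually.of_forall fun σ2 => ?_
    apply Measurable.aestronglyMeasurable
    have m1 : Measurable (Set.indicator (Set.Ioi (0:ℝ)) g) :=
      hg_cont.measurable.indicator measurableSet_Ioi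
    have m2 : Measurable (fun t : ℝ => σ2 * t + μ2) := by fun_prop
    exact (m1.comp m2).mul (by fun_prop)
  have hbd : ∀ᶠ σ2 in nhdsWithin (0:ℝ) (Set.Ioi 0),
      ∀ᵐ t : ℝ, ‖h σ2 t‖ ≤ (μ2 + |t|) * Real.exp (-t ^ 2 / 2) := by
    filter_upwards [Ioo_mem_nhdsGT_of_mem (Set.mem_Ico.mpr ⟨le_refl (0:ℝ), one_pos⟩)]
      with σ2 hσ2
    refine Filter.Eventually.of_forall fun t => ?_
    obtain ⟨hσ2pos, hσ2lt⟩ := hσ2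
    by_cases hmem : σ2 * t + μ2 ∈ Set.Ioi (0:ℝ)
    · simp only [hhdef, Set.indicator_of_mem hmem, hgdef]
      rw [norm_mul, Real.norm_eq_abs, Real.norm_eq_abs, abs_of_pos (Real.exp_pos _)]
      apply mul_le_mul_of_nonneg_right _ (Real.exp_pos _).le
      rw [abs_mul, abs_of_pos hmem]
      have hle1 : |Real.exp (-(x * (σ2 * t + μ2) - μ1) ^ 2 / (2 * σ1 ^ 2))| ≤ 1 := by
        rw [abs_of_pos (Real.exp_pos _)]
        apply Real.exp_le_one_iff.mpr
        apply div_nonpos_of_nonpos_of_nonneg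
        · simp [sq_nonneg]
        · positivity
      calc (σ2 * t + μ2) * |Real.exp (-(x * (σ2 * t + μ2) - μ1) ^ 2 / (2 * σ1 ^ 2))|
          ≤ (σ2 * t + μ2) * 1 := mul_le_mul_of_nonneg_left hle1 (le_of_lt hmem)
        _ = σ2 * t + μ2 := mul_one _
        _ ≤ μ2 + |t| := by
            have : σ2 * t ≤ |t| := by
              calc σ2 * t ≤ σ2 * |t| := mul_le_mul_of_nonneg_left (le_abs_self t) hσ2pos.le
                _ ≤ 1 * |t| := mul_le_mul_of_nonneg_right hσ2lt.le (abs_nonneg t)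
                _ = |t| := one_mul _
            linarith
    · simp only [hhdef, Set.indicator_of_notMem hmem, zero_mul, norm_zero]
      positivity
  have hlim : ∀ᵐ t : ℝ, Tendsto (fun σ2 => h σ2 t) (nhdsWithin (0:ℝ) (Set.Ioi 0))
      (nhds (μ2 * C * Real.exp (-t ^ 2 / 2))) := by
    refine Filter.Eventually.of_forall fun t => ?_
    have hcont : Tendsto (fun σ2 : ℝ => g (σ2 * t + μ2) * Real.exp (-t ^ 2 / 2))
        (nhds (0:ℝ)) (nhds (g μ2 * Real.exp (-t ^ 2 / 2))) := by
      have : Continuous fun σ2 : ℝ => g (σ2 * t + μ2) * Real.exp (-t ^ 2 / 2) := by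
        apply Continuous.mul _ continuous_const
        exact hg_cont.comp (by fun_prop)
      have h0 := this.tendsto 0
      simpa using h0
    have hgval : g μ2 = μ2 * C := by simp [hgdef, hCdef]
    rw [hgval] at hcont
    refine Tendsto.congr' ?_ (hcont.mono_left nhdsWithin_le_nhds)
    have hev : Set.Ioo (0:ℝ) (μ2 / (|t| + 1)) ∈ nhdsWithin (0:ℝ) (Set.Ioi 0) :=
      Ioo_mem_nhdsGT_of_mem (Set.mem_Ico.mpr ⟨le_refl _, by positivity⟩)
    filter_upwards [hev] with σ2 hσ2
    obtain ⟨hσ2pos, hσ2lt⟩ := hσ2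
    have hmem : σ2 * t + μ2 ∈ Set.Ioi (0:ℝ) := by
      simp only [Set.mem_Ioi]
      have h1 : σ2 * |t| < μ2 := by
        calc σ2 * |t| ≤ σ2 * (|t| + 1) := by nlinarith [abs_nonneg t]
          _ < μ2 / (|t| + 1) * (|t| + 1) := by
              apply mul_lt_mul_of_pos_right hσ2lt; positivity
          _ = μ2 := by field_simp
      have h2 : -(σ2 * |t|) ≤ σ2 * t := by
        have := neg_abs_le t
        nlinarith
      linarith
    simp [hhdef, Set.indicator_of_mem hmem]
  have hDCT : Tendsto (fun σ2 => ∫ t : ℝ, h σ2 t) (nhdsWithin (0:ℝ) (Set.Ioi 0))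
      (nhds (∫ t : ℝ, μ2 * C * Real.exp (-t ^ 2 / 2))) :=
    MeasureTheory.tendsto_integral_filter_of_dominated_convergence _ hmeas hbd hbound_int hlim
  -- compute the limit integral
  have hIval : (∫ t : ℝ, μ2 * C * Real.exp (-t ^ 2 / 2)) = μ2 * C * Real.sqrt (2 * π) := by
    rw [MeasureTheory.integral_const_mul]
    congr 1
    have := integral_gaussian (1/2 : ℝ)
    have heq : (∫ t : ℝ, Real.exp (-t ^ 2 / 2)) = ∫ t : ℝ, Real.exp (-(1/2 : ℝ) * t ^ 2) := by
      congr 1; funext t; congr 1; ring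
    rw [heq, this]
    rw [show π / (1/2 : ℝ) = 2 * π by ring]
  rw [hIval] at hDCT
  -- conclude
  have hfinal : Tendsto
      (fun σ2 : ℝ => (2 * π * σ1)⁻¹ * ∫ t : ℝ, h σ2 t)
      (nhdsWithin (0:ℝ) (Set.Ioi 0))
      (nhds ((2 * π * σ1)⁻¹ * (μ2 * C * Real.sqrt (2 * π)))) :=
    hDCT.const_mul _
  have htarget : (2 * π * σ1)⁻¹ * (μ2 * C * Real.sqrt (2 * π))
      = μ2 / (Real.sqrt (2 * π) * σ1) * C := by
    set S := Real.sqrt (2 * π) with hS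
    have hs : S * S = 2 * π := Real.mul_self_sqrt (by positivity)
    have hspos : (0:ℝ) < S := Real.sqrt_pos.mpr (by positivity)
    rw [← hs]
    field_simp
  rw [htarget] at hfinal
  refine hfinal.congr' ?_
  filter_upwards [self_mem_nhdsWithin] with σ2 hσ2
  rw [key σ2 hσ2]
  have : (2 * π * σ1 * σ2)⁻¹ * (σ2 * ∫ t : ℝ, h σ2 t)
      = (2 * π * σ1)⁻¹ * ∫ t : ℝ, h σ2 t := by
    have hσ2' : σ2 ≠ 0 := ne_of_gt hσ2
    field_simp
  rw [this]
end
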